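/- Let A ∈ T^{n×n} with ρ(A) = 0 and assume A is torsion with A^{⊙(k+c)} = A^{⊙k} for some k, c ≥ 1. Then the powers E = A^{⊙m} with m ≥ k, c | m are tropically idempotent (E⊙E = E), and for any of the ranks tr-rk, col-rk, row-rk, the sequence rk(A^{⊙m}) is eventually constant with limit equal to tr-rk(E) = col-rk(E) = row-rk(E). -/

import Mathlib

/-- The max-plus (tropical) semiring `T = ℝ ∪ {-∞}`. -/
abbrev T : Type := WithBot ℝ

/-- Tropical matrix product. -/
noncomputable def tmul {n m k : ℕ} (A : Fin n → Fin m → T) (B : Fin m → Fin k → T) :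
    Fin n → Fin k → T :=
  fun i j => Finset.univ.sup fun l => A i l + B l j

/-- Tropical matrix-vector product. -/
noncomputable def tmulVec {n m : ℕ} (A : Fin n → Fin m → T) (u : Fin m → T) : Fin n → T :=
  fun i => Finset.univ.sup fun j => A i j + u j

/-- Tropical identity matrix. -/
noncomputable def tId (n : ℕ) : Fin n → Fin n → T :=
  fun i j => if i = j then (0 : T) else ⊥

/-- Tropical matrix powers. -/
noncomputable def tpow {n : ℕ} (A : Fin n → Fin n → T) : ℕ → (Fin n → Fin n → T)
  | 0 => tId n
  | (m + 1) => tmul (tpow A m) A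

/-- Tropical product of a list of matrices (empty product = identity). -/
noncomputable def tProd {n : ℕ} : List (Fin n → Fin n → T) → (Fin n → Fin n → T)
  | [] => tId n
  | (M :: L) => tmul M (tProd L)

/-- Weight of a permutation. -/
noncomputable def wt {n : ℕ} (A : Fin n → Fin n → T) (σ : Equiv.Perm (Fin n)) : T :=
  ∑ i, A i (σ i)

/-- Tropical permanent. -/
noncomputable def per {n : ℕ} (A : Fin n → Fin n → T) : T :=
  Finset.univ.sup fun σ : Equiv.Perm (Fin n) => wt A σ

/-- Tropical non-singularity: finite permanent attained by a unique permutation. -/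
def NonSingular {n : ℕ} (A : Fin n → Fin n → T) : Prop :=
  per A ≠ ⊥ ∧ ∃! σ : Equiv.Perm (Fin n), wt A σ = per A

/-- Weight of the circuit `c 0 → c 1 → ⋯ → c ℓ → c 0` (length `ℓ+1`). -/
noncomputable def cwt {n ℓ : ℕ} (A : Fin n → Fin n → T) (c : Fin (ℓ + 1) → Fin n) : T :=
  ∑ k : Fin (ℓ + 1), A (c k) (c (k + 1))

/-- `ρ(A) = r`: some circuit has mean weight `r`, and every circuit has mean weight `≤ r`. -/
def RhoEq {n : ℕ} (A : Fin n → Fin n → T) (r : ℝ) : Prop :=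
  (∃ ℓ, ∃ c : Fin (ℓ + 1) → Fin n, cwt A c = ((((ℓ : ℝ) + 1) * r : ℝ) : T)) ∧
  ∀ ℓ, ∀ c : Fin (ℓ + 1) → Fin n, cwt A c ≤ ((((ℓ : ℝ) + 1) * r : ℝ) : T)

/-- `(i,j)` is an arc of the critical graph (lies on a circuit of mean weight `r = ρ(A)`). -/
def CritArc {n : ℕ} (A : Fin n → Fin n → T) (r : ℝ) (i j : Fin n) : Prop :=
  ∃ ℓ, ∃ c : Fin (ℓ + 1) → Fin n, cwt A c = ((((ℓ : ℝ) + 1) * r : ℝ) : T) ∧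
    ∃ k : Fin (ℓ + 1), c k = i ∧ c (k + 1) = j

/-- `i` is a node of the critical graph. -/
def CritNode {n : ℕ} (A : Fin n → Fin n → T) (r : ℝ) (i : Fin n) : Prop :=
  ∃ ℓ, ∃ c : Fin (ℓ + 1) → Fin n, cwt A c = ((((ℓ : ℝ) + 1) * r : ℝ) : T) ∧
    ∃ k : Fin (ℓ + 1), c k = i

/-- Reachability in the critical graph. -/
def CritReach {n : ℕ} (A : Fin n → Fin n → T) (r : ℝ) : Fin n → Fin n → Prop :=
  Relation.ReflTransGen (fun i j => CritArc A r i j)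

/-- Same strongly connected component of the critical graph. -/
def SameScc {n : ℕ} (A : Fin n → Fin n → T) (r : ℝ) (i j : Fin n) : Prop :=
  CritReach A r i j ∧ CritReach A r j i

/-- `R` is a set of representatives, one per scc of the critical graph. -/
def SccReps {n : ℕ} (A : Fin n → Fin n → T) (r : ℝ) (R : Finset (Fin n)) : Prop :=
  (∀ i ∈ R, CritNode A r i) ∧
  (∀ i ∈ R, ∀ j ∈ R, i ≠ j → ¬ SameScc A r i j) ∧
  (∀ j, CritNode A r j → ∃ i ∈ R, SameScc A r i j)

/-- Cyclicity of the scc of the critical graph containing `i`: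
the gcd (greatest common divisor) of the lengths of the critical circuits through `i`. -/
noncomputable def cycAt {n : ℕ} (A : Fin n → Fin n → T) (r : ℝ) (i : Fin n) : ℕ :=
  sSup {d : ℕ | ∀ ℓ : ℕ,
    (∃ c : Fin (ℓ + 1) → Fin n, cwt A c = ((((ℓ : ℝ) + 1) * r : ℝ) : T) ∧ c 0 = i) →
    d ∣ (ℓ + 1)}

/-- `A` has an `r × r` tropically non-singular submatrix. -/
def HasNSsub {n m : ℕ} (A : Fin n → Fin m → T) (r : ℕ) : Prop :=
  ∃ f : Fin r → Fin n, ∃ g : Fin r → Fin m,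
    Function.Injective f ∧ Function.Injective g ∧
    NonSingular (fun i j => A (f i) (g j))

/-- Tropical rank: maximal size of a tropically non-singular square submatrix. -/
noncomputable def trrk {n m : ℕ} (A : Fin n → Fin m → T) : ℕ :=
  sSup {r : ℕ | HasNSsub A r}

/-- Tropical convex hull (span) of a finite family of vectors of `T^n`. -/
def tSpan {n m : ℕ} (v : Fin m → (Fin n → T)) : Set (Fin n → T) :=
  { w | ∃ α : Fin m → T, w = fun i => Finset.univ.sup fun j => α j + v j i }

/-- Weak dimension of a tropically convex set: minimal size of a generating family. -/
noncomputable def weakDim {n : ℕ} (X : Set (Fin n → T)) : ℕ :=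
  sInf {k : ℕ | ∃ v : Fin k → (Fin n → T), tSpan v = X}

/-- Column rank: weak dimension of the tropical convex hull of the columns. -/
noncomputable def colrk {n m : ℕ} (A : Fin n → Fin m → T) : ℕ :=
  weakDim (tSpan fun j => fun i => A i j)

/-- Row rank: weak dimension of the tropical convex hull of the rows. -/
noncomputable def rowrk {n m : ℕ} (A : Fin n → Fin m → T) : ℕ :=
  weakDim (tSpan fun i => fun j => A i j)


lemma sum_ne_bot {ι : Type*} {s : Finset ι} {f : ι → T} (h : ∑ i ∈ s, f i ≠ ⊥) :
    ∀ i ∈ s, f i ≠ ⊥ := by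
  intro i hi hbot
  apply h
  classical
  rw [← Finset.sum_erase_add s f hi, hbot, WithBot.add_bot]

lemma add_right_cancel_le {w : ℝ} {x y : T} (h : x + (w:T) ≤ y + (w:T)) : x ≤ y := by
  induction x using WithBot.recBotCoe with
  | bot => exact bot_le
  | coe x =>
    induction y using WithBot.recBotCoe with
    | bot =>
      rw [WithBot.bot_add, ← WithBot.coe_add] at h
      exact absurd h (by simp)
    | coe y =>
      rw [← WithBot.coe_add, ← WithBot.coe_add, WithBot.coe_le_coe] at h
      exact WithBot.coe_le_coe.mpr (by linarith)

lemma eq_zero_of_add_eq_zero {x y : T} (hx : x ≤ 0) (hy : y ≤ 0) (hxy : x + y = 0) :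
    x = 0 ∧ y = 0 := by
  induction x using WithBot.recBotCoe with
  | bot => rw [WithBot.bot_add] at hxy; exact absurd hxy (by simp)
  | coe x =>
    induction y using WithBot.recBotCoe with
    | bot => rw [WithBot.add_bot] at hxy; exact absurd hxy (by simp)
    | coe y =>
      rw [← WithBot.coe_add, show (0:T) = ((0:ℝ):T) from rfl, WithBot.coe_eq_coe] at hxy
      rw [show (0:T) = ((0:ℝ):T) from rfl, WithBot.coe_le_coe] at hx hy
      rw [show (0:T) = ((0:ℝ):T) from rfl, WithBot.coe_eq_coe, WithBot.coe_eq_coe]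
      constructor <;> linarith

lemma add_finsetSup {ι : Type*} [Fintype ι] (a : T) (f : ι → T) :
    (Finset.univ.sup fun i => a + f i) = a + Finset.univ.sup f := by
  classical
  exact (Finset.comp_sup_eq_sup_comp (fun z => a + z) (fun x y => (max_add_add_left a x y).symm)
    (by simp)).symm

lemma finsetSup_add {ι : Type*} [Fintype ι] (a : T) (f : ι → T) :
    (Finset.univ.sup fun i => f i + a) = Finset.univ.sup f + a := by
  classical
  exact (Finset.comp_sup_eq_sup_comp (fun z => z + a) (fun x y => (max_add_add_right x y a).symm)
    (by simp)).symm

lemma sup_attained {ι : Type*} [Fintype ι] {f : ι → T} (h : Finset.univ.sup f ≠ ⊥) :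
    ∃ i, f i = Finset.univ.sup f := by
  classical
  rcases (Finset.univ : Finset ι).eq_empty_or_nonempty with he | hne
  · rw [he] at h; simp at h
  · obtain ⟨i, _, hi⟩ := Finset.exists_mem_eq_sup Finset.univ hne f
    exact ⟨i, hi.symm⟩

lemma unit_sup {n : ℕ} (f : Fin n → T) (j : Fin n) :
    (Finset.univ.sup fun l => (if l = j then (0:T) else ⊥) + f l) = f j := by
  apply le_antisymm
  · apply Finset.sup_le
    intro l _
    by_cases h : l = j
    · subst h; simp
    · simp [h]
  · have := Finset.le_sup (f := fun l => (if l = j then (0:T) else ⊥) + f l)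
      (Finset.mem_univ j)
    simpa using this

lemma tmul_assoc {n m p q : ℕ} (A : Fin n → Fin m → T) (B : Fin m → Fin p → T)
    (C : Fin p → Fin q → T) : tmul (tmul A B) C = tmul A (tmul B C) := by
  funext i j
  show (Finset.univ.sup fun l => (Finset.univ.sup fun x => A i x + B x l) + C l j)
      = Finset.univ.sup fun x => A i x + Finset.univ.sup fun l => B x l + C l j
  calc (Finset.univ.sup fun l => (Finset.univ.sup fun x => A i x + B x l) + C l j)
      = Finset.univ.sup fun l => Finset.univ.sup fun x => (A i x + B x l) + C l j := by
        refine Finset.sup_congr rfl fun l _ => ?_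
        rw [← finsetSup_add]
    _ = Finset.univ.sup fun x => Finset.univ.sup fun l => (A i x + B x l) + C l j :=
        Finset.sup_comm _ _ _
    _ = Finset.univ.sup fun x => A i x + Finset.univ.sup fun l => B x l + C l j := by
        refine Finset.sup_congr rfl fun x _ => ?_
        rw [← add_finsetSup]
        refine Finset.sup_congr rfl fun l _ => ?_
        rw [add_assoc]

lemma tmul_id {n m : ℕ} (A : Fin n → Fin m → T) : tmul A (tId m) = A := by
  funext i j
  show (Finset.univ.sup fun l => A i l + (if l = j then (0:T) else ⊥)) = A i j
  have : ∀ l, A i l + (if l = j then (0:T) else ⊥) = (if l = j then (0:T) else ⊥) + A i l := by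
    intro l; rw [add_comm]
  rw [show (fun l => A i l + (if l = j then (0:T) else ⊥)) = fun l => (if l = j then (0:T) else ⊥) + A i l from funext this]
  exact unit_sup (A i) j

lemma id_tmul {n m : ℕ} (A : Fin n → Fin m → T) : tmul (tId n) A = A := by
  funext i j
  show (Finset.univ.sup fun l => (if i = l then (0:T) else ⊥) + A l j) = A i j
  have hfe : (fun l => (if i = l then (0:T) else ⊥) + A l j)
      = fun l => (if l = i then (0:T) else ⊥) + (fun l => A l j) l := by
    funext l
    by_cases h : l = i
    · simp [h]
    · rw [if_neg (fun hh => h hh.symm), if_neg h]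
  rw [hfe]
  exact unit_sup (fun l => A l j) i

lemma tpow_add {n : ℕ} (A : Fin n → Fin n → T) (a b : ℕ) :
    tpow A (a + b) = tmul (tpow A a) (tpow A b) := by
  induction b with
  | zero => simp [tpow, tmul_id]
  | succ b ih =>
    show tpow A ((a+b)+1) = _
    rw [show tpow A ((a+b)+1) = tmul (tpow A (a+b)) A from rfl, ih,
      show tpow A (b+1) = tmul (tpow A b) A from rfl, tmul_assoc]

section Walks
variable {n : ℕ} {E : Fin n → Fin n → T}

lemma tri (hE : tmul E E = E) (l m j : Fin n) : E l m + E m j ≤ E l j := by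
  have h : (Finset.univ.sup fun x => E l x + E x j) = E l j := congrFun (congrFun hE l) j
  rw [← h]
  exact Finset.le_sup (f := fun x => E l x + E x j) (Finset.mem_univ m)

lemma diag_le (hE : tmul E E = E) (s : Fin n) : E s s ≤ 0 := by
  have h := tri hE s s s
  by_cases hb : E s s = ⊥
  · rw [hb]; exact bot_le
  · obtain ⟨x, hx⟩ := WithBot.ne_bot_iff_exists.mp hb
    rw [← hx, ← WithBot.coe_add, WithBot.coe_le_coe] at h
    rw [← hx, show (0:T) = ((0:ℝ):T) from rfl, WithBot.coe_le_coe]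
    linarith

noncomputable def wwt (E : Fin n → Fin n → T) : Fin n → List (Fin n) → Fin n → T
  | l, [], j => E l j
  | l, (x :: xs), j => E l x + wwt E x xs j

lemma wwt_le (hE : tmul E E = E) : ∀ (xs : List (Fin n)) (l j : Fin n), wwt E l xs j ≤ E l j := by
  intro xs
  induction xs with
  | nil => intro l j; exact le_refl _
  | cons x xs ih =>
    intro l j
    calc wwt E l (x :: xs) j = E l x + wwt E x xs j := rfl
      _ ≤ E l x + E x j := add_le_add_right (ih x j) _
      _ ≤ E l j := tri hE l x j

lemma wwt_exists (hE : tmul E E = E) : ∀ (p : ℕ) (l j : Fin n), E l j ≠ ⊥ →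
    ∃ xs : List (Fin n), xs.length = p ∧ wwt E l xs j = E l j := by
  intro p
  induction p with
  | zero => intro l j _; exact ⟨[], rfl, rfl⟩
  | succ p ih =>
    intro l j hne
    have : E l j = Finset.univ.sup fun m => E l m + E m j := (congrFun (congrFun hE l) j).symm
    have hsup : Finset.univ.sup (fun m => E l m + E m j) ≠ ⊥ := by rw [← this]; exact hne
    obtain ⟨x, hx⟩ : ∃ x, E l x + E x j = Finset.univ.sup fun m => E l m + E m j := by
      rcases (Finset.univ : Finset (Fin n)).eq_empty_or_nonempty with he | hne'
      · rw [he] at hsup; simp at hsup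
      · obtain ⟨x, _, hx⟩ := Finset.exists_mem_eq_sup _ hne' (fun m => E l m + E m j)
        exact ⟨x, hx.symm⟩
    rw [← this] at hx
    have hxj : E x j ≠ ⊥ := by
      intro hb; rw [hb, WithBot.add_bot] at hx; exact hne hx.symm
    obtain ⟨xs, hlen, hwwt⟩ := ih x j hxj
    exact ⟨x :: xs, by simp [hlen], by show E l x + wwt E x xs j = E l j; rw [hwwt, hx]⟩

lemma wwt_split : ∀ (ys : List (Fin n)) (l s j : Fin n) (zs : List (Fin n)),
    wwt E l (ys ++ s :: zs) j = wwt E l ys s + wwt E s zs j := by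
  intro ys
  induction ys with
  | nil => intro l s j zs; rfl
  | cons y ys ih =>
    intro l s j zs
    show E l y + wwt E y (ys ++ s :: zs) j = (E l y + wwt E y ys s) + wwt E s zs j
    rw [ih, add_assoc]

lemma list_dup : ∀ (xs : List (Fin n)), ¬ xs.Nodup →
    ∃ (p : List (Fin n)) (s : Fin n) (q r : List (Fin n)), xs = p ++ s :: (q ++ s :: r) := by
  intro xs
  induction xs with
  | nil => intro h; exact absurd List.nodup_nil h
  | cons x xs ih =>
    intro h
    by_cases hx : x ∈ xs
    · obtain ⟨q, r, rfl⟩ := List.append_of_mem hx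
      exact ⟨[], x, q, r, rfl⟩
    · have : ¬ xs.Nodup := fun hnd => h (List.nodup_cons.mpr ⟨hx, hnd⟩)
      obtain ⟨p, s, q, r, rfl⟩ := ih this
      exact ⟨x :: p, s, q, r, rfl⟩

lemma key_node (hE : tmul E E = E) (l j : Fin n) (hne : E l j ≠ ⊥) :
    ∃ s, E s s = 0 ∧ E l j = E l s + E s j := by
  obtain ⟨xs, hlen, hwwt⟩ := wwt_exists hE (n + 1) l j hne
  have hnd : ¬ xs.Nodup := by
    intro hnd
    have := List.Nodup.length_le_card hnd
    rw [hlen, Fintype.card_fin] at this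
    omega
  obtain ⟨p, s, q, r, rfl⟩ := list_dup xs hnd
  have hsplit : wwt E l (p ++ s :: (q ++ s :: r)) j
      = wwt E l p s + (wwt E s q s + wwt E s r j) := by
    rw [wwt_split, wwt_split]
  have hle : E l j ≤ E l s + (E s s + E s j) := by
    rw [← hwwt, hsplit]
    refine add_le_add (wwt_le hE p l s) (add_le_add (wwt_le hE q s s) (wwt_le hE r s j))
  have h1 : E l s + (E s s + E s j) ≤ E l s + (0 + E s j) :=
    add_le_add_right (add_le_add_left (diag_le hE s) _) _
  have h2 : E l s + (0 + E s j) = E l s + E s j := by rw [zero_add]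
  have h3 : E l s + E s j ≤ E l j := tri hE l s j
  have heq : E l j = E l s + (E s s + E s j) := le_antisymm hle (h1.trans (h2.le.trans h3))
  have heq2 : E l j = E l s + E s j := le_antisymm (hle.trans (h1.trans h2.le)) h3
  have hls : E l s ≠ ⊥ := by intro hb; rw [hb, WithBot.bot_add] at heq2; exact hne heq2
  have hsj : E s j ≠ ⊥ := by intro hb; rw [hb, WithBot.add_bot] at heq2; exact hne heq2
  have hss : E s s ≠ ⊥ := by
    intro hb; rw [hb, WithBot.bot_add, WithBot.add_bot] at heq; exact hne heq
  refine ⟨s, ?_, heq2⟩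
  obtain ⟨a, ha⟩ := WithBot.ne_bot_iff_exists.mp hls
  obtain ⟨b, hb⟩ := WithBot.ne_bot_iff_exists.mp hsj
  obtain ⟨e, he⟩ := WithBot.ne_bot_iff_exists.mp hss
  rw [← ha, ← hb, ← he] at heq
  rw [← ha, ← hb] at heq2
  rw [← he]
  rw [heq] at heq2
  rw [← WithBot.coe_add, ← WithBot.coe_add, ← WithBot.coe_add, WithBot.coe_eq_coe] at heq2
  rw [show (0:T) = ((0:ℝ):T) from rfl, WithBot.coe_eq_coe]
  linarith


attribute [local instance] Classical.propDecidable

section Crit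
variable {n : ℕ}

def relE (E : Fin n → Fin n → T) (i j : Fin n) : Prop := E i j + E j i = 0

noncomputable def Sset (E : Fin n → Fin n → T) : Finset (Fin n) :=
  Finset.univ.filter fun i => E i i = 0

noncomputable def Rset (E : Fin n → Fin n → T) : Finset (Fin n) :=
  (Sset E).filter fun i => ∀ j ∈ Sset E, relE E i j → i ≤ j

variable {E : Fin n → Fin n → T}

lemma mem_Sset {i : Fin n} : i ∈ Sset E ↔ E i i = 0 := by simp [Sset]

lemma relE_refl {i : Fin n} (hi : E i i = 0) : relE E i i := by
  unfold relE; rw [hi, zero_add]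

lemma relE_symm {i j : Fin n} (h : relE E i j) : relE E j i := by
  unfold relE at *; rwa [add_comm]

lemma relE_ne_bot {i j : Fin n} (h : relE E i j) : E i j ≠ ⊥ ∧ E j i ≠ ⊥ := by
  constructor
  · intro hb; unfold relE at h; rw [hb, WithBot.bot_add] at h; exact absurd h (by simp)
  · intro hb; unfold relE at h; rw [hb, WithBot.add_bot] at h; exact absurd h (by simp)

lemma relE_trans (hE : tmul E E = E) {i j l : Fin n} (hi : E i i = 0)
    (h1 : relE E i j) (h2 : relE E j l) : relE E i l := by
  unfold relE at *
  have hge : (0 : T) ≤ E i l + E l i := by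
    have h3 : (E i j + E j l) + (E l j + E j i) ≤ E i l + E l i :=
      add_le_add (tri hE i j l) (tri hE l j i)
    have : (E i j + E j l) + (E l j + E j i) = (E i j + E j i) + (E j l + E l j) := by
      abel
    rw [this, h1, h2, add_zero] at h3
    exact h3
  have hle : E i l + E l i ≤ 0 := by rw [← hi]; exact tri hE i l i
  exact le_antisymm hle hge

lemma Rset_subset {i : Fin n} (hi : i ∈ Rset E) : E i i = 0 :=
  mem_Sset.mp (Finset.mem_filter.mp hi).1

lemma Rset_min {i : Fin n} (hi : i ∈ Rset E) : ∀ j ∈ Sset E, relE E i j → i ≤ j :=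
  (Finset.mem_filter.mp hi).2

lemma reps_distinct {i j : Fin n} (hi : i ∈ Rset E) (hj : j ∈ Rset E) (h : relE E i j) :
    i = j :=
  le_antisymm (Rset_min hi j (Finset.mem_filter.mp hj).1 h)
    (Rset_min hj i (Finset.mem_filter.mp hi).1 (relE_symm h))

lemma reps_exists (hE : tmul E E = E) {s : Fin n} (hs : E s s = 0) :
    ∃ i ∈ Rset E, relE E i s := by
  have hsC : s ∈ (Sset E).filter (fun i => relE E i s) :=
    Finset.mem_filter.mpr ⟨mem_Sset.mpr hs, relE_refl hs⟩
  have hne : ((Sset E).filter (fun i => relE E i s)).Nonempty := ⟨s, hsC⟩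
  have hmem := Finset.min'_mem _ hne
  have hmem' := Finset.mem_filter.mp hmem
  refine ⟨Finset.min' _ hne, ?_, hmem'.2⟩
  simp only [Rset, Finset.mem_filter]
  refine ⟨hmem'.1, fun j hj hrel => ?_⟩
  apply Finset.min'_le
  have hjj : E j j = 0 := mem_Sset.mp hj
  exact Finset.mem_filter.mpr ⟨hj, relE_trans hE hjj (relE_symm hrel) hmem'.2⟩

/-- enumeration of the representatives -/
noncomputable def repf (E : Fin n → Fin n → T) : Fin (Rset E).card → Fin n :=
  (Rset E).orderEmbOfFin rfl

lemma repf_mem (a : Fin (Rset E).card) : repf E a ∈ Rset E :=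
  Finset.orderEmbOfFin_mem (Rset E) rfl a

lemma repf_inj : Function.Injective (repf E) :=
  (Finset.orderEmbOfFin (Rset E) rfl).injective

lemma repf_surj {x : Fin n} (hx : x ∈ Rset E) : ∃ a, repf E a = x := by
  have := Finset.range_orderEmbOfFin (Rset E) rfl
  have hx' : x ∈ Set.range (repf E) := by rw [show Set.range (repf E) = ↑(Rset E) from this]; exact hx
  exact hx'

lemma fact_le (hE : tmul E E = E) (i j : Fin n) (a : Fin (Rset E).card) :
    E i (repf E a) + E (repf E a) j ≤ E i j := tri hE i (repf E a) j

/-- The key factorization through representatives. -/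
lemma Efact (hE : tmul E E = E) (i j : Fin n) :
    E i j = Finset.univ.sup fun a : Fin (Rset E).card => E i (repf E a) + E (repf E a) j := by
  apply le_antisymm
  · by_cases hb : E i j = ⊥
    · rw [hb]; exact bot_le
    obtain ⟨s, hss, hsplit⟩ := key_node hE i j hb
    obtain ⟨x, hxR, hxs⟩ := reps_exists hE hss
    obtain ⟨a, rfl⟩ := repf_surj hxR
    have h1 : E i s ≤ E i (repf E a) + E (repf E a) s := by
      have h2 : E i s + (E s (repf E a) + E (repf E a) s) ≤ E i (repf E a) + E (repf E a) s := by
        rw [← add_assoc]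
        exact add_le_add_left (tri hE i s (repf E a)) _
      have h3 : E s (repf E a) + E (repf E a) s = 0 := relE_symm hxs
      rw [h3, add_zero] at h2
      exact h2
    have h4 : E i j ≤ E i (repf E a) + E (repf E a) j := by
      calc E i j = E i s + E s j := hsplit
        _ ≤ (E i (repf E a) + E (repf E a) s) + E s j := add_le_add_left h1 _
        _ = E i (repf E a) + (E (repf E a) s + E s j) := add_assoc _ _ _
        _ ≤ E i (repf E a) + E (repf E a) j := add_le_add_right (tri hE (repf E a) s j) _
    exact h4.trans (Finset.le_sup (f := fun a => E i (repf E a) + E (repf E a) j)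
      (Finset.mem_univ a))
  · exact Finset.sup_le fun a _ => fact_le hE i j a

end Crit

section Trrk

lemma add_eq_bot' {x y : T} : x + y = ⊥ ↔ x = ⊥ ∨ y = ⊥ := WithBot.add_eq_bot

lemma sum_ne_bot_of {ι : Type*} {s : Finset ι} {f : ι → T} (h : ∀ i ∈ s, f i ≠ ⊥) :
    ∑ i ∈ s, f i ≠ ⊥ := by
  classical
  induction s using Finset.cons_induction with
  | empty => simp
  | cons a s ha ih =>
    rw [Finset.sum_cons]
    intro hb
    rcases add_eq_bot'.mp hb with h1 | h2
    · exact h a (Finset.mem_cons_self a s) h1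
    · exact ih (fun i hi => h i (Finset.mem_cons.mpr (Or.inr hi))) h2

lemma wt_le_per {q : ℕ} (M : Fin q → Fin q → T) (σ : Equiv.Perm (Fin q)) : wt M σ ≤ per M :=
  Finset.le_sup (f := fun σ => wt M σ) (Finset.mem_univ σ)

lemma hasNS_zero {n m : ℕ} (A : Fin n → Fin m → T) : HasNSsub A 0 := by
  refine ⟨Fin.elim0, Fin.elim0, fun a => a.elim0, fun a => a.elim0, ?_, ?_⟩
  · have h1 : per (fun (i : Fin 0) (j : Fin 0) => A (Fin.elim0 i) (Fin.elim0 j)) = 0 := by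
      show Finset.univ.sup _ = 0
      rw [show (fun σ : Equiv.Perm (Fin 0) => wt (fun i j => A (Fin.elim0 i) (Fin.elim0 j)) σ)
          = fun _ => (0:T) from funext fun σ => by simp [wt]]
      rw [Finset.sup_const Finset.univ_nonempty]
    rw [h1]; simp
  · exact ⟨1, rfl, fun y _ => Subsingleton.elim y 1⟩

lemma hasNS_card_le {n m q : ℕ} {A : Fin n → Fin m → T} (h : HasNSsub A q) : q ≤ n := by
  obtain ⟨f, _, hf, _, _⟩ := h
  simpa using Fintype.card_le_of_injective f hf

lemma trrk_bddAbove {n m : ℕ} (A : Fin n → Fin m → T) : BddAbove {r : ℕ | HasNSsub A r} :=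
  ⟨n, fun q hq => hasNS_card_le hq⟩

lemma le_trrk {n m q : ℕ} {A : Fin n → Fin m → T} (h : HasNSsub A q) : q ≤ trrk A :=
  le_csSup (trrk_bddAbove A) h

lemma trrk_le {n m b : ℕ} {A : Fin n → Fin m → T} (h : ∀ q, HasNSsub A q → q ≤ b) :
    trrk A ≤ b :=
  csSup_le ⟨0, hasNS_zero A⟩ (fun q hq => h q hq)

/-- Key lemma: a nonsingular submatrix of a product gives one (same size) in the left factor. -/
lemma hasNS_tmul_left {n p m q : ℕ} {U : Fin n → Fin p → T} {V : Fin p → Fin m → T}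
    (h : HasNSsub (tmul U V) q) : HasNSsub U q := by
  obtain ⟨f, g, hf, hg, hper, σ0, hσ0, huniq⟩ := h
  set M : Fin q → Fin q → T := fun a b => tmul U V (f a) (g b) with hMdef
  have hwt : wt M σ0 = ∑ a, M a (σ0 a) := rfl
  have hterm : ∀ a, M a (σ0 a) ≠ ⊥ := by
    intro a
    exact sum_ne_bot (by rw [← hwt, hσ0]; exact hper) a (Finset.mem_univ a)
  have hchoice : ∀ a, ∃ lx, U (f a) lx + V lx (g (σ0 a)) = M a (σ0 a) := by
    intro a
    have hMs : M a (σ0 a) = Finset.univ.sup (fun lx => U (f a) lx + V lx (g (σ0 a))) := rfl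
    have hne : Finset.univ.sup (fun lx => U (f a) lx + V lx (g (σ0 a))) ≠ ⊥ := by
      rw [← hMs]; exact hterm a
    obtain ⟨lx, hlx⟩ := sup_attained hne
    exact ⟨lx, by rw [hlx, ← hMs]⟩
  choose l hl using hchoice
  have hUne : ∀ a, U (f a) (l a) ≠ ⊥ := by
    intro a hb
    exact hterm a (by rw [← hl a, hb, WithBot.bot_add])
  have hVne : ∀ a, V (l a) (g (σ0 a)) ≠ ⊥ := by
    intro a hb
    exact hterm a (by rw [← hl a, hb, WithBot.add_bot])
  -- injectivity of l by the swap argument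
  have hlinj : Function.Injective l := by
    intro a b hab
    by_contra hne
    have hFle : ∀ x, (U (f x) (l x) + V (l (Equiv.swap a b x)) (g (σ0 (Equiv.swap a b x))))
        ≤ M x ((σ0 * Equiv.swap a b) x) := by
      intro x
      have h1 : U (f x) (l x) + V (l x) (g (σ0 (Equiv.swap a b x)))
          ≤ M x (σ0 (Equiv.swap a b x)) :=
        Finset.le_sup (f := fun lx => U (f x) lx + V lx (g (σ0 (Equiv.swap a b x))))
          (Finset.mem_univ (l x))
      have hlswap : l (Equiv.swap a b x) = l x := by
        by_cases hxa : x = a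
        · subst hxa; rw [Equiv.swap_apply_left, ← hab]
        by_cases hxb : x = b
        · subst hxb; rw [Equiv.swap_apply_right, hab]
        · rw [Equiv.swap_apply_of_ne_of_ne hxa hxb]
      rw [hlswap]
      exact h1
    have hsum : ∑ x, (U (f x) (l x) + V (l (Equiv.swap a b x)) (g (σ0 (Equiv.swap a b x))))
        = per M := by
      rw [Finset.sum_add_distrib]
      rw [Equiv.sum_comp (Equiv.swap a b) (fun y => V (l y) (g (σ0 y)))]
      rw [← Finset.sum_add_distrib]
      rw [Finset.sum_congr rfl (fun x _ => hl x)]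
      rw [← hwt, hσ0]
    have hwt1 : per M ≤ wt M (σ0 * Equiv.swap a b) := by
      rw [← hsum]
      exact Finset.sum_le_sum (fun x _ => hFle x)
    have heq : wt M (σ0 * Equiv.swap a b) = per M :=
      le_antisymm (wt_le_per M _) hwt1
    have hσeq : σ0 * Equiv.swap a b = σ0 := huniq _ heq
    have hswap1 : Equiv.swap a b = 1 := mul_left_cancel (a := σ0) (by rw [mul_one]; exact hσeq)
    apply hne
    have := congrArg (fun e => Equiv.toFun e a) hswap1
    simpa [Equiv.swap_apply_left] using this.symm
  -- the submatrix of U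
  set W : T := ∑ a, V (l a) (g (σ0 a)) with hW
  have hWne : W ≠ ⊥ := sum_ne_bot_of (fun a _ => hVne a)
  have hUVper : (∑ a, U (f a) (l a)) + W = per M := by
    rw [hW, ← Finset.sum_add_distrib, Finset.sum_congr rfl (fun x _ => hl x), ← hwt, hσ0]
  have hkey : ∀ τ : Equiv.Perm (Fin q),
      (∑ a, U (f a) (l (τ a))) + W ≤ per M ∧
      ((∑ a, U (f a) (l (τ a))) + W = per M → τ = 1) := by
    intro τ
    have hre : (∑ a, U (f a) (l (τ a))) + W
        = ∑ a, (U (f a) (l (τ a)) + V (l (τ a)) (g (σ0 (τ a)))) := by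
      rw [hW, show (∑ a, V (l a) (g (σ0 a))) = ∑ a, V (l (τ a)) (g (σ0 (τ a))) from
        (Equiv.sum_comp τ (fun y => V (l y) (g (σ0 y)))).symm]
      rw [← Finset.sum_add_distrib]
    have hle2 : ∀ a : Fin q, U (f a) (l (τ a)) + V (l (τ a)) (g (σ0 (τ a)))
        ≤ M a ((σ0 * τ) a) := by
      intro a
      exact Finset.le_sup (f := fun lx => U (f a) lx + V lx (g (σ0 (τ a))))
        (Finset.mem_univ (l (τ a)))
    have hchain : (∑ a, U (f a) (l (τ a))) + W ≤ wt M (σ0 * τ) := by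
      rw [hre]
      exact Finset.sum_le_sum (fun a _ => hle2 a)
    refine ⟨hchain.trans (wt_le_per M _), fun heq => ?_⟩
    have h1 : per M ≤ wt M (σ0 * τ) := by rw [← heq]; exact hchain
    have h2 : σ0 * τ = σ0 := huniq _ (le_antisymm (wt_le_per M _) h1)
    exact mul_left_cancel (a := σ0) (by rw [mul_one]; exact h2)
  obtain ⟨w, hw⟩ := WithBot.ne_bot_iff_exists.mp hWne
  refine ⟨f, l, hf, hlinj, ?_, ?_⟩
  · -- per ≠ ⊥
    have hone : wt (fun a b => U (f a) (l b)) 1 = ∑ a, U (f a) (l a) := by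
      simp [wt]
    have hne1 : wt (fun a b => U (f a) (l b)) 1 ≠ ⊥ := by
      rw [hone]; exact sum_ne_bot_of (fun a _ => hUne a)
    intro hb
    exact hne1 (le_bot_iff.mp (hb ▸ wt_le_per (fun a b => U (f a) (l b)) 1))
  · refine ⟨1, ?_, ?_⟩
    · -- wt 1 = per
      apply le_antisymm (wt_le_per _ 1)
      apply Finset.sup_le
      intro τ _
      have h1 := (hkey τ).1
      rw [← hUVper] at h1
      have hwtτ : wt (fun a b => U (f a) (l b)) τ = ∑ a, U (f a) (l (τ a)) := rfl
      have hwt1 : wt (fun a b => U (f a) (l b)) 1 = ∑ a, U (f a) (l a) := by simp [wt]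
      rw [hwtτ, hwt1]
      rw [← hw] at h1
      exact add_right_cancel_le h1
    · intro τ hτ
      have hwtτ : wt (fun a b => U (f a) (l b)) τ = ∑ a, U (f a) (l (τ a)) := rfl
      have hwt1 : wt (fun a b => U (f a) (l b)) 1 = ∑ a, U (f a) (l a) := by simp [wt]
      have hper1 : per (fun a b => U (f a) (l b)) = wt (fun a b => U (f a) (l b)) 1 := by
        apply le_antisymm
        · apply Finset.sup_le
          intro ρ _
          have h1 := (hkey ρ).1
          rw [← hUVper, ← hw] at h1
          rw [hwt1, show wt (fun a b => U (f a) (l b)) ρ = ∑ a, U (f a) (l (ρ a)) from rfl]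
          exact add_right_cancel_le h1
        · exact wt_le_per _ 1
      apply (hkey τ).2
      rw [hwtτ] at hτ
      rw [hτ, hper1, hwt1, hUVper]
end Trrk

section PermSum
variable {q : ℕ} {B : Fin q → Fin q → T}

lemma chain_le (htri : ∀ a b c, B a b + B b c ≤ B a c) (σ : Equiv.Perm (Fin q)) (a : Fin q) :
    ∀ t, 1 ≤ t → ∑ i ∈ Finset.range t, B ((⇑σ)^[i] a) ((⇑σ)^[i+1] a) ≤ B a ((⇑σ)^[t] a) := by
  intro t
  induction t with
  | zero => intro h; exact absurd h (by omega)
  | succ t ih =>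
    intro _
    by_cases ht : t = 0
    · subst ht; simp [Finset.sum_range_one]
    · rw [Finset.sum_range_succ]
      have h1 := ih (by omega)
      calc (∑ i ∈ Finset.range t, B ((⇑σ)^[i] a) ((⇑σ)^[i+1] a)) + B ((⇑σ)^[t] a) ((⇑σ)^[t+1] a)
          ≤ B a ((⇑σ)^[t] a) + B ((⇑σ)^[t] a) ((⇑σ)^[t+1] a) := add_le_add_left h1 _
        _ ≤ B a ((⇑σ)^[t+1] a) := htri _ _ _

lemma iterate_mem {σ : Equiv.Perm (Fin q)} {s : Finset (Fin q)} (hcl : ∀ x ∈ s, σ x ∈ s)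
    {a : Fin q} (ha : a ∈ s) : ∀ i, (⇑σ)^[i] a ∈ s := by
  intro i
  induction i with
  | zero => exact ha
  | succ i ih => rw [Function.iterate_succ_apply']; exact hcl _ ih

lemma perm_periodic (σ : Equiv.Perm (Fin q)) (a : Fin q) :
    Function.IsPeriodicPt (⇑σ) (orderOf σ) a := by
  show (⇑σ)^[orderOf σ] a = a
  simp [Equiv.Perm.iterate_eq_pow, pow_orderOf_eq_one]

lemma minPeriod_pos (σ : Equiv.Perm (Fin q)) (a : Fin q) :
    0 < Function.minimalPeriod (⇑σ) a :=
  (perm_periodic σ a).minimalPeriod_pos (orderOf_pos σ)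

lemma orbit_lemma (σ : Equiv.Perm (Fin q)) (a : Fin q) :
    let t := Function.minimalPeriod (⇑σ) a
    let O := (Finset.range t).image (fun i => (⇑σ)^[i] a)
    a ∈ O ∧ (∀ x ∈ O, σ x ∈ O) ∧
    (∑ x ∈ O, B x (σ x)) = ∑ i ∈ Finset.range t, B ((⇑σ)^[i] a) ((⇑σ)^[i+1] a) := by
  intro t O
  have htpos : 0 < t := minPeriod_pos σ a
  have hta : (⇑σ)^[t] a = a := Function.iterate_minimalPeriod
  have hinj : Set.InjOn (fun i => (⇑σ)^[i] a) (Finset.range t : Finset ℕ) := by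
    intro i hi j hj hij
    simp only [Finset.coe_range, Set.mem_Iio] at hi hj
    exact Function.iterate_injOn_Iio_minimalPeriod hi hj hij
  refine ⟨?_, ?_, ?_⟩
  · exact Finset.mem_image.mpr ⟨0, Finset.mem_range.mpr htpos, rfl⟩
  · intro x hx
    obtain ⟨i, hi, rfl⟩ := Finset.mem_image.mp hx
    rw [Finset.mem_range] at hi
    rw [← Function.iterate_succ_apply' (⇑σ) i a]
    by_cases hit : i + 1 < t
    · exact Finset.mem_image.mpr ⟨i+1, Finset.mem_range.mpr hit, rfl⟩
    · have hit' : i + 1 = t := by omega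
      simp only [Nat.succ_eq_add_one]
      rw [hit', hta]
      exact Finset.mem_image.mpr ⟨0, Finset.mem_range.mpr htpos, rfl⟩
  · rw [Finset.sum_image (fun i hi j hj hij => hinj hi hj hij)]
    refine Finset.sum_congr rfl (fun i _ => ?_)
    rw [← Function.iterate_succ_apply' (⇑σ) i a]

lemma perm_sum_le (htri : ∀ a b c, B a b + B b c ≤ B a c) (hdiag : ∀ a, B a a ≤ 0)
    (σ : Equiv.Perm (Fin q)) :
    ∀ s : Finset (Fin q), (∀ x ∈ s, σ x ∈ s) → ∑ x ∈ s, B x (σ x) ≤ 0 := by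
  intro s
  induction s using Finset.strongInduction with
  | _ s ih =>
    intro hcl
    rcases s.eq_empty_or_nonempty with rfl | ⟨a, ha⟩
    · simp
    · set t := Function.minimalPeriod (⇑σ) a with htdef
      set O := (Finset.range t).image (fun i => (⇑σ)^[i] a) with hOdef
      obtain ⟨haO, hOcl, hOsum⟩ := orbit_lemma (B := B) σ a
      have hOs : O ⊆ s := by
        intro x hx
        obtain ⟨i, _, rfl⟩ := Finset.mem_image.mp hx
        exact iterate_mem hcl ha i
      have hsplit : (∑ x ∈ s \ O, B x (σ x)) + ∑ x ∈ O, B x (σ x) = ∑ x ∈ s, B x (σ x) :=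
        Finset.sum_sdiff hOs
      have hOle : ∑ x ∈ O, B x (σ x) ≤ 0 := by
        rw [hOsum]
        calc ∑ i ∈ Finset.range t, B ((⇑σ)^[i] a) ((⇑σ)^[i+1] a)
            ≤ B a ((⇑σ)^[t] a) := chain_le htri σ a t (minPeriod_pos σ a)
          _ = B a a := by rw [Function.iterate_minimalPeriod]
          _ ≤ 0 := hdiag a
      have hrest : ∑ x ∈ s \ O, B x (σ x) ≤ 0 := by
        apply ih (s \ O) (Finset.sdiff_ssubset hOs ⟨a, haO⟩)
        intro x hx
        rw [Finset.mem_sdiff] at hx ⊢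
        refine ⟨hcl x hx.1, ?_⟩
        intro hσO
        apply hx.2
        obtain ⟨i, hi, hix⟩ := Finset.mem_image.mp hσO
        rw [Finset.mem_range] at hi
        by_cases hi0 : i = 0
        · subst hi0
          have : σ x = (⇑σ)^[t] a := by rw [Function.iterate_minimalPeriod]; exact hix.symm
          have hx' : x = (⇑σ)^[t-1] a := by
            apply σ.injective
            rw [this, ← Function.iterate_succ_apply' (⇑σ) (t-1) a]
            congr 1
            have := minPeriod_pos σ a
            omega
          rw [hx']
          exact Finset.mem_image.mpr ⟨t-1, Finset.mem_range.mpr (by have := minPeriod_pos σ a; omega), rfl⟩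
        · have hx' : x = (⇑σ)^[i-1] a := by
            apply σ.injective
            rw [← hix, ← Function.iterate_succ_apply' (⇑σ) (i-1) a]
            congr 1
            omega
          rw [hx']
          exact Finset.mem_image.mpr ⟨i-1, Finset.mem_range.mpr (by omega), rfl⟩
      calc ∑ x ∈ s, B x (σ x) = _ + _ := hsplit.symm
        _ ≤ 0 + 0 := add_le_add hrest hOle
        _ = 0 := by rw [add_zero]

lemma perm_sum_zero (htri : ∀ a b c, B a b + B b c ≤ B a c) (hdiag : ∀ a, B a a ≤ 0)
    (σ : Equiv.Perm (Fin q)) {a : Fin q} (ha : σ a ≠ a)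
    (hsum : ∑ x : Fin q, B x (σ x) = 0) :
    B a (σ a) + B (σ a) a = 0 := by
  set t := Function.minimalPeriod (⇑σ) a with htdef
  set O := (Finset.range t).image (fun i => (⇑σ)^[i] a) with hOdef
  obtain ⟨haO, hOcl, hOsum⟩ := orbit_lemma (B := B) σ a
  have hOs : O ⊆ Finset.univ := Finset.subset_univ O
  have hsplit : (∑ x ∈ Finset.univ \ O, B x (σ x)) + ∑ x ∈ O, B x (σ x)
      = ∑ x : Fin q, B x (σ x) := Finset.sum_sdiff hOs
  have htpos : 0 < t := minPeriod_pos σ a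
  have ht2 : 2 ≤ t := by
    by_contra hlt
    have ht1 : t = 1 := by omega
    apply ha
    have hh := Function.iterate_minimalPeriod (f := ⇑σ) (x := a)
    rw [← htdef, ht1] at hh
    simpa using hh
  have hOle : ∑ x ∈ O, B x (σ x) ≤ 0 := by
    rw [hOsum]
    calc ∑ i ∈ Finset.range t, B ((⇑σ)^[i] a) ((⇑σ)^[i+1] a)
        ≤ B a ((⇑σ)^[t] a) := chain_le htri σ a t (by omega)
      _ = B a a := by rw [Function.iterate_minimalPeriod]
      _ ≤ 0 := hdiag a
  have hrest : ∑ x ∈ Finset.univ \ O, B x (σ x) ≤ 0 := by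
    apply perm_sum_le htri hdiag σ
    intro x hx
    rw [Finset.mem_sdiff] at hx ⊢
    refine ⟨Finset.mem_univ _, ?_⟩
    intro hσO
    apply hx.2
    obtain ⟨i, hi, hix⟩ := Finset.mem_image.mp hσO
    rw [Finset.mem_range] at hi
    by_cases hi0 : i = 0
    · subst hi0
      have h1 : σ x = (⇑σ)^[t] a := by rw [Function.iterate_minimalPeriod]; exact hix.symm
      have hx' : x = (⇑σ)^[t-1] a := by
        apply σ.injective
        rw [h1, ← Function.iterate_succ_apply' (⇑σ) (t-1) a]
        congr 1
        omega
      rw [hx']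
      exact Finset.mem_image.mpr ⟨t-1, Finset.mem_range.mpr (by omega), rfl⟩
    · have hx' : x = (⇑σ)^[i-1] a := by
        apply σ.injective
        rw [← hix, ← Function.iterate_succ_apply' (⇑σ) (i-1) a]
        congr 1
        omega
      rw [hx']
      exact Finset.mem_image.mpr ⟨i-1, Finset.mem_range.mpr (by omega), rfl⟩
  rw [hsum] at hsplit
  obtain ⟨h1, h2⟩ := eq_zero_of_add_eq_zero hrest hOle hsplit
  -- now the orbit sum equals 0 and splits as B a (σ a) + (chain from σ a back to a)
  rw [hOsum] at h2
  have hsplit2 : ∑ i ∈ Finset.range t, B ((⇑σ)^[i] a) ((⇑σ)^[i+1] a)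
      = (∑ i ∈ Finset.range (t-1), B ((⇑σ)^[i+1] a) ((⇑σ)^[i+2] a)) + B a ((⇑σ)^[1] a) := by
    have h3 := Finset.sum_range_succ' (fun i => B ((⇑σ)^[i] a) ((⇑σ)^[i+1] a)) (t-1)
    rw [show t - 1 + 1 = t by omega] at h3
    rw [h3]
    rfl
  have hchain2 : ∑ i ∈ Finset.range (t-1), B ((⇑σ)^[i+1] a) ((⇑σ)^[i+2] a) ≤ B (σ a) a := by
    have h4 : ∀ i, (⇑σ)^[i+1] a = (⇑σ)^[i] (σ a) := fun i => Function.iterate_succ_apply (⇑σ) i a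
    have h5 : ∑ i ∈ Finset.range (t-1), B ((⇑σ)^[i+1] a) ((⇑σ)^[i+2] a)
        = ∑ i ∈ Finset.range (t-1), B ((⇑σ)^[i] (σ a)) ((⇑σ)^[i+1] (σ a)) := by
      refine Finset.sum_congr rfl (fun i _ => ?_)
      rw [h4 i, show i + 2 = (i+1)+1 by omega, h4 (i+1)]
    rw [h5]
    calc ∑ i ∈ Finset.range (t-1), B ((⇑σ)^[i] (σ a)) ((⇑σ)^[i+1] (σ a))
        ≤ B (σ a) ((⇑σ)^[t-1] (σ a)) := chain_le htri σ (σ a) (t-1) (by omega)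
      _ = B (σ a) a := by
          have h6 : (⇑σ)^[t-1+1] a = (⇑σ)^[t-1] (σ a) := Function.iterate_succ_apply (⇑σ) (t-1) a
          rw [show t - 1 + 1 = t by omega] at h6
          rw [← h6, Function.iterate_minimalPeriod]
  have hge : (0:T) ≤ B a (σ a) + B (σ a) a := by
    rw [← h2, hsplit2]
    have := add_le_add_left hchain2 (B a ((⇑σ)^[1] a))
    calc (∑ i ∈ Finset.range (t-1), B ((⇑σ)^[i+1] a) ((⇑σ)^[i+2] a)) + B a ((⇑σ)^[1] a)
        ≤ B (σ a) a + B a ((⇑σ)^[1] a) := this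
      _ = B a (σ a) + B (σ a) a := by
          rw [add_comm, Function.iterate_one]
  have hle : B a (σ a) + B (σ a) a ≤ 0 := (htri a (σ a) a).trans (hdiag a)
  exact le_antisymm hle hge

end PermSum

section TrrkE
variable {n : ℕ} {E : Fin n → Fin n → T}

lemma hasNS_reps (hE : tmul E E = E) : HasNSsub E (Rset E).card := by
  set B : Fin (Rset E).card → Fin (Rset E).card → T := fun a b => E (repf E a) (repf E b)
    with hB
  have htri : ∀ a b c, B a b + B b c ≤ B a c := fun a b c => tri hE _ _ _
  have hdiagz : ∀ a, B a a = 0 := fun a => Rset_subset (E := E) (repf_mem a)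
  have hdiag : ∀ a, B a a ≤ 0 := fun a => (hdiagz a).le
  have hwt1 : wt B 1 = 0 := by
    show (∑ a, B a a) = 0
    rw [Finset.sum_congr rfl (fun a _ => hdiagz a)]
    simp
  have hwtle : ∀ σ, wt B σ ≤ 0 := by
    intro σ
    exact perm_sum_le htri hdiag σ Finset.univ (fun x _ => Finset.mem_univ _)
  have hperB : per B = 0 := by
    apply le_antisymm
    · exact Finset.sup_le (fun σ _ => hwtle σ)
    · rw [← hwt1]; exact wt_le_per B 1
  refine ⟨repf E, repf E, repf_inj, repf_inj, ?_, 1, by show wt B 1 = per B; rw [hperB, hwt1], ?_⟩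
  · rw [hperB]; simp
  · intro σ hσ
    have hσ : wt B σ = 0 := by rw [← hperB]; exact hσ
    by_contra hne
    have hex : ∃ a, σ a ≠ a := by
      by_contra hall
      push_neg at hall
      exact hne (Equiv.ext hall)
    obtain ⟨a, ha⟩ := hex
    have h0 := perm_sum_zero htri hdiag σ ha hσ
    have hrel : relE E (repf E a) (repf E (σ a)) := h0
    have := reps_distinct (repf_mem a) (repf_mem (σ a)) hrel
    exact ha (repf_inj this).symm

lemma hasNS_card_le_col {n' m' q : ℕ} {A : Fin n' → Fin m' → T} (h : HasNSsub A q) : q ≤ m' := by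
  obtain ⟨_, g, _, hg, _⟩ := h
  simpa using Fintype.card_le_of_injective g hg

lemma hasNS_E_le (hE : tmul E E = E) : ∀ q, HasNSsub E q → q ≤ (Rset E).card := by
  intro q hq
  have hEfact : E = tmul (fun i (a : Fin (Rset E).card) => E i (repf E a))
      (fun a j => E (repf E a) j) := by
    funext i j
    exact Efact hE i j
  rw [hEfact] at hq
  exact hasNS_card_le_col (hasNS_tmul_left hq)

lemma trrk_E (hE : tmul E E = E) : trrk E = (Rset E).card :=
  le_antisymm (trrk_le (hasNS_E_le hE)) (le_trrk (hasNS_reps hE))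

end TrrkE

section Span
variable {n : ℕ}

lemma sup_exchange {ι κ : Type*} [Fintype ι] [Fintype κ] (α : ι → T) (B : ι → κ → T)
    (u : κ → T) :
    Finset.univ.sup (fun j => α j + Finset.univ.sup (fun m => B j m + u m))
      = Finset.univ.sup (fun m => Finset.univ.sup (fun j => α j + B j m) + u m) := by
  calc Finset.univ.sup (fun j => α j + Finset.univ.sup (fun m => B j m + u m))
      = Finset.univ.sup (fun j => Finset.univ.sup (fun m => α j + (B j m + u m))) := by
        refine Finset.sup_congr rfl (fun j _ => ?_)
        rw [add_finsetSup]
    _ = Finset.univ.sup (fun m => Finset.univ.sup (fun j => α j + (B j m + u m))) :=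
        Finset.sup_comm _ _ _
    _ = Finset.univ.sup (fun m => Finset.univ.sup (fun j => (α j + B j m) + u m)) := by
        refine Finset.sup_congr rfl (fun m _ => ?_)
        refine Finset.sup_congr rfl (fun j _ => ?_)
        rw [add_assoc]
    _ = Finset.univ.sup (fun m => Finset.univ.sup (fun j => α j + B j m) + u m) := by
        refine Finset.sup_congr rfl (fun m _ => ?_)
        rw [finsetSup_add]

lemma mem_tSpan_self {m : ℕ} (v : Fin m → (Fin n → T)) (j : Fin m) : v j ∈ tSpan v := by
  refine ⟨fun j' => if j' = j then (0:T) else ⊥, ?_⟩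
  funext i
  exact (unit_sup (fun j' => v j' i) j).symm

lemma tSpan_mono_comp {m p : ℕ} {v : Fin m → Fin n → T} {u : Fin p → Fin n → T}
    (h : ∀ j, v j ∈ tSpan u) : tSpan v ⊆ tSpan u := by
  intro w hw
  obtain ⟨α, rfl⟩ := hw
  choose B hB using h
  refine ⟨fun mm => Finset.univ.sup (fun j => α j + B j mm), ?_⟩
  funext i
  calc Finset.univ.sup (fun j => α j + v j i)
      = Finset.univ.sup (fun j => α j + Finset.univ.sup (fun mm => B j mm + u mm i)) := by
        refine Finset.sup_congr rfl (fun j _ => ?_)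
        rw [congrFun (hB j) i]
    _ = Finset.univ.sup (fun mm => Finset.univ.sup (fun j => α j + B j mm) + u mm i) :=
        sup_exchange α B (fun mm => u mm i)

variable {E : Fin n → Fin n → T}

/-- the representative columns -/
noncomputable def repcols (E : Fin n → Fin n → T) : Fin (Rset E).card → (Fin n → T) :=
  fun a i => E i (repf E a)

lemma repcols_span (hE : tmul E E = E) :
    tSpan (repcols E) = tSpan (fun j i => E i j) := by
  apply Set.Subset.antisymm
  · apply tSpan_mono_comp
    intro a
    exact mem_tSpan_self (fun j i => E i j) (repf E a)
  · apply tSpan_mono_comp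
    intro j
    refine ⟨fun a => E (repf E a) j, ?_⟩
    funext i
    show E i j = Finset.univ.sup fun a => E (repf E a) j + repcols E a i
    calc E i j = Finset.univ.sup (fun a => E i (repf E a) + E (repf E a) j) := Efact hE i j
      _ = Finset.univ.sup (fun a => E (repf E a) j + repcols E a i) := by
          refine Finset.sup_congr rfl (fun a _ => ?_)
          rw [add_comm]
          rfl

/-- every column of E is a combination of representative columns -/
lemma col_in_repspan (hE : tmul E E = E) (w : Fin n → T)
    (hw : w ∈ tSpan (fun j i => E i j)) :
    ∃ γ : Fin (Rset E).card → T, w = fun i => Finset.univ.sup fun b => γ b + E i (repf E b) := by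
  have := repcols_span hE ▸ hw
  obtain ⟨γ, hγ⟩ := this
  exact ⟨γ, hγ⟩

lemma colrk_lower (hE : tmul E E = E) {t : ℕ} (w : Fin t → (Fin n → T))
    (hspan : tSpan w = tSpan (fun j i => E i j)) : (Rset E).card ≤ t := by
  -- for each representative a find a generator equal (up to finite shift) to the rep column
  have hkey : ∀ a : Fin (Rset E).card, ∃ (j : Fin t) (va : ℝ),
      (∀ i, (va : T) + w j i = E i (repf E a)) := by
    intro a
    have hraa : E (repf E a) (repf E a) = 0 := Rset_subset (repf_mem a)
    have hcol : (fun i => E i (repf E a)) ∈ tSpan w := by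
      rw [hspan]
      exact mem_tSpan_self (fun j i => E i j) (repf E a)
    obtain ⟨α, hα⟩ := hcol
    have hcoord : Finset.univ.sup (fun j => α j + w j (repf E a)) = 0 := by
      have := congrFun hα (repf E a)
      rw [hraa] at this
      exact this.symm
    have hne : Finset.univ.sup (fun j => α j + w j (repf E a)) ≠ ⊥ := by
      rw [hcoord]; simp
    obtain ⟨j, hj⟩ := sup_attained hne
    rw [hcoord] at hj
    -- rewrite w j through the representative columns
    have hwj : w j ∈ tSpan (fun j' i => E i j') := by
      rw [← hspan]; exact mem_tSpan_self w j
    obtain ⟨γ, hγ⟩ := col_in_repspan hE (w j) hwj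
    -- coordinate (repf E a):
    have hthru : ∀ i, α j + w j i = Finset.univ.sup (fun b => (α j + γ b) + E i (repf E b)) := by
      intro i
      rw [congrFun hγ i, ← add_finsetSup]
      refine Finset.sup_congr rfl (fun b _ => ?_)
      rw [add_assoc]
    have hc2 : Finset.univ.sup (fun b => (α j + γ b) + E (repf E a) (repf E b)) = 0 := by
      rw [← hthru (repf E a)]; exact hj
    have hne2 : Finset.univ.sup (fun b => (α j + γ b) + E (repf E a) (repf E b)) ≠ ⊥ := by
      rw [hc2]; simp
    obtain ⟨b, hb⟩ := sup_attained hne2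
    rw [hc2] at hb
    -- pointwise bound
    have hbound : ∀ i, (α j + γ b) + E i (repf E b) ≤ E i (repf E a) := by
      intro i
      have h1 : (α j + γ b) + E i (repf E b) ≤ α j + w j i := by
        rw [hthru i]
        exact Finset.le_sup (f := fun b => (α j + γ b) + E i (repf E b)) (Finset.mem_univ b)
      have h2 : α j + w j i ≤ E i (repf E a) := by
        have h3 : α j + w j i ≤ Finset.univ.sup (fun j' => α j' + w j' i) :=
          Finset.le_sup (f := fun j' => α j' + w j' i) (Finset.mem_univ j)
        rw [← congrFun hα i] at h3
        exact h3
      exact h1.trans h2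
    -- at i = repf E b
    have hrbb : E (repf E b) (repf E b) = 0 := Rset_subset (repf_mem b)
    have hdle : (α j + γ b) ≤ E (repf E b) (repf E a) := by
      have := hbound (repf E b)
      rwa [hrbb, add_zero] at this
    have hrel : relE E (repf E a) (repf E b) := by
      have hge : (0:T) ≤ E (repf E a) (repf E b) + E (repf E b) (repf E a) := by
        calc (0:T) = E (repf E a) (repf E b) + (α j + γ b) := by rw [add_comm]; exact hb.symm
          _ ≤ E (repf E a) (repf E b) + E (repf E b) (repf E a) := add_le_add_right hdle _
      have hle : E (repf E a) (repf E b) + E (repf E b) (repf E a) ≤ 0 := by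
        rw [← hraa]; exact tri hE _ _ _
      exact le_antisymm hle hge
    have hab : a = b := repf_inj (reps_distinct (repf_mem a) (repf_mem b) hrel)
    subst hab
    -- δ = 0
    have hδ : (α j + γ a) = 0 := by
      have := hb
      rwa [hraa, add_zero] at this
    -- exact equality
    have hexact : ∀ i, α j + w j i = E i (repf E a) := by
      intro i
      apply le_antisymm
      · have h2 : α j + w j i ≤ Finset.univ.sup (fun j' => α j' + w j' i) :=
          Finset.le_sup (f := fun j' => α j' + w j' i) (Finset.mem_univ j)
        rw [← congrFun hα i] at h2
        exact h2
      · calc E i (repf E a) = (α j + γ a) + E i (repf E a) := by rw [hδ, zero_add]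
          _ ≤ α j + w j i := by
              rw [hthru i]
              exact Finset.le_sup (f := fun b => (α j + γ b) + E i (repf E b))
                (Finset.mem_univ a)
    -- α j is finite
    have hαne : α j ≠ ⊥ := by
      intro hbot
      have := hexact (repf E a)
      rw [hbot, WithBot.bot_add, hraa] at this
      exact absurd this (by simp)
    obtain ⟨va, hva⟩ := WithBot.ne_bot_iff_exists.mp hαne
    exact ⟨j, va, fun i => by rw [hva]; exact hexact i⟩
  choose J V hJV using hkey
  have hJinj : Function.Injective J := by
    intro a1 a2 hJ
    have h1 := hJV a1
    have h2 := hJV a2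
    rw [hJ] at h1
    have hr11 : E (repf E a1) (repf E a1) = 0 := Rset_subset (repf_mem a1)
    have hr22 : E (repf E a2) (repf E a2) = 0 := Rset_subset (repf_mem a2)
    -- w (J a2) (repf E a1) and (repf E a2) values
    have e11 : (V a1 : T) + w (J a2) (repf E a1) = 0 := by rw [h1 (repf E a1), hr11]
    have e22 : (V a2 : T) + w (J a2) (repf E a2) = 0 := by rw [h2 (repf E a2), hr22]
    have e12 : (V a2 : T) + w (J a2) (repf E a1) = E (repf E a1) (repf E a2) :=
      h2 (repf E a1)
    have e21 : (V a1 : T) + w (J a2) (repf E a2) = E (repf E a2) (repf E a1) :=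
      h1 (repf E a2)
    -- w values are finite
    have hw1ne : w (J a2) (repf E a1) ≠ ⊥ := by
      intro hbot; rw [hbot, WithBot.add_bot] at e11; exact absurd e11 (by simp)
    have hw2ne : w (J a2) (repf E a2) ≠ ⊥ := by
      intro hbot; rw [hbot, WithBot.add_bot] at e22; exact absurd e22 (by simp)
    obtain ⟨u1, hu1⟩ := WithBot.ne_bot_iff_exists.mp hw1ne
    obtain ⟨u2, hu2⟩ := WithBot.ne_bot_iff_exists.mp hw2ne
    rw [← hu1] at e11 e12
    rw [← hu2] at e22 e21
    have hrel : relE E (repf E a1) (repf E a2) := by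
      unfold relE
      rw [← e12, ← e21, ← WithBot.coe_add, ← WithBot.coe_add, ← WithBot.coe_add]
      rw [← WithBot.coe_add, show (0:T) = ((0:ℝ):T) from rfl, WithBot.coe_eq_coe] at e11 e22
      rw [show (0:T) = ((0:ℝ):T) from rfl, WithBot.coe_eq_coe]
      linarith
    exact repf_inj (reps_distinct (repf_mem a1) (repf_mem a2) hrel)
  simpa using Fintype.card_le_of_injective J hJinj

lemma colrk_E (hE : tmul E E = E) : colrk E = (Rset E).card := by
  have hmem : (Rset E).card ∈ {k : ℕ | ∃ v : Fin k → (Fin n → T), tSpan v = tSpan fun j i => E i j} :=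
    ⟨repcols E, repcols_span hE⟩
  apply le_antisymm
  · exact Nat.sInf_le hmem
  · refine le_csInf ⟨_, hmem⟩ ?_
    rintro t ⟨v, hv⟩
    exact colrk_lower hE v hv

end Span

section Transpose
variable {n : ℕ}

def ttrans {m : ℕ} (A : Fin n → Fin m → T) : Fin m → Fin n → T := fun j i => A i j

lemma ttrans_tmul {p m : ℕ} (X : Fin n → Fin p → T) (Y : Fin p → Fin m → T) :
    ttrans (tmul X Y) = tmul (ttrans Y) (ttrans X) := by
  funext j i
  show Finset.univ.sup (fun l => X i l + Y l j) = Finset.univ.sup (fun l => Y l j + X i l)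
  exact Finset.sup_congr rfl (fun l _ => add_comm _ _)

variable {E : Fin n → Fin n → T}

lemma ttrans_idem (hE : tmul E E = E) : tmul (ttrans E) (ttrans E) = ttrans E := by
  rw [← ttrans_tmul, hE]

lemma Rset_ttrans : Rset (ttrans E) = Rset E := by
  have hS : Sset (ttrans E) = Sset E := rfl
  have hrel : ∀ i j, relE (ttrans E) i j ↔ relE E i j := by
    intro i j
    unfold relE ttrans
    rw [add_comm]
  unfold Rset
  rw [hS]
  apply Finset.filter_congr
  intro i _
  constructor
  · intro h j hj hr; exact h j hj ((hrel i j).mpr hr)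
  · intro h j hj hr; exact h j hj ((hrel i j).mp hr)

lemma rowrk_E (hE : tmul E E = E) : rowrk E = (Rset E).card := by
  have h1 : rowrk E = colrk (ttrans E) := rfl
  rw [h1, colrk_E (ttrans_idem hE), Rset_ttrans]

lemma cols_tmul_subset {X Y : Fin n → Fin n → T} :
    tSpan (fun j i => tmul X Y i j) ⊆ tSpan (fun l i => X i l) := by
  apply tSpan_mono_comp
  intro j
  refine ⟨fun l => Y l j, ?_⟩
  funext i
  show Finset.univ.sup (fun l => X i l + Y l j) = Finset.univ.sup fun l => Y l j + X i l
  exact Finset.sup_congr rfl (fun l _ => add_comm _ _)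

lemma rows_tmul_subset {X Y : Fin n → Fin n → T} :
    tSpan (fun i j => tmul X Y i j) ⊆ tSpan (fun l j => Y l j) := by
  apply tSpan_mono_comp
  intro i
  exact ⟨fun l => X i l, rfl⟩

end Transpose

/-- If `ρ(A) = 0` and `A^{k+c} = A^k`, then the powers `A^m` with
`m ≥ k`, `c ∣ m` are idempotent, and all three ranks of `A^m` are eventually constant
with common value the ranks of such an idempotent power. -/
theorem stmt13 {n : ℕ} (A : Fin n → Fin n → T) (h0 : RhoEq A 0)
    (k c : ℕ) (hk : 1 ≤ k) (hc : 1 ≤ c) (h : tpow A (k + c) = tpow A k) :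
    (∀ m : ℕ, k ≤ m → c ∣ m → tmul (tpow A m) (tpow A m) = tpow A m) ∧
    ∃ d : ℕ,
      (∀ m : ℕ, k ≤ m → c ∣ m →
        trrk (tpow A m) = d ∧ colrk (tpow A m) = d ∧ rowrk (tpow A m) = d) ∧
      ∃ N : ℕ, ∀ m : ℕ, N ≤ m →
        trrk (tpow A m) = d ∧ colrk (tpow A m) = d ∧ rowrk (tpow A m) = d := by
  have hstep : ∀ m, k ≤ m → tpow A (m + c) = tpow A m := by
    intro m hm
    obtain ⟨s, rfl⟩ := Nat.exists_eq_add_of_le hm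
    rw [show k + s + c = (k + c) + s by ring, tpow_add, h, ← tpow_add]
  have hmany : ∀ m, k ≤ m → ∀ t, tpow A (m + t*c) = tpow A m := by
    intro m hm t
    induction t with
    | zero => simp
    | succ t ih =>
      rw [show m + (t+1)*c = (m + t*c) + c by ring,
        hstep (m + t*c) (hm.trans (Nat.le_add_right m (t*c))), ih]
  have hkc : k ≤ k * c := by
    calc k = k * 1 := (mul_one k).symm
      _ ≤ k * c := Nat.mul_le_mul_left k hc
  have heqE : ∀ m, k ≤ m → c ∣ m → tpow A m = tpow A (k*c) := by
    intro m hm hd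
    have h1 : tpow A (k*c + m) = tpow A (k*c) := by
      obtain ⟨t, rfl⟩ := hd
      rw [show k*c + c*t = k*c + t*c by ring]
      exact hmany (k*c) hkc t
    have h2 : tpow A (m + k*c) = tpow A m := hmany m hm k
    rw [← h2, show m + k*c = k*c + m by ring, h1]
  set E := tpow A (k*c) with hEdef
  have hEidem : tmul E E = E := by
    rw [hEdef, ← tpow_add]
    exact heqE (k*c + k*c) (hkc.trans (Nat.le_add_right _ _)) ⟨2*k, by ring⟩
  have hpart1 : ∀ m, k ≤ m → c ∣ m → tmul (tpow A m) (tpow A m) = tpow A m := by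
    intro m hm hd
    rw [heqE m hm hd]
    exact hEidem
  have hmain : ∀ m, k ≤ m →
      trrk (tpow A m) = (Rset E).card ∧ colrk (tpow A m) = (Rset E).card ∧
      rowrk (tpow A m) = (Rset E).card := by
    intro m hm
    have hm1 : m ≤ m * c := by
      calc m = m * 1 := (mul_one m).symm
        _ ≤ m * c := Nat.mul_le_mul_left m hc
    have hkmc : k ≤ m * c := hm.trans hm1
    have hstab : tmul E (tpow A m) = tpow A m := by
      rw [hEdef, ← tpow_add, show k*c + m = m + k*c by ring]
      exact hmany m hm k
    have hstab' : tmul (tpow A m) E = tpow A m := by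
      rw [hEdef, ← tpow_add]
      exact hmany m hm k
    have hfac : tmul (tpow A m) (tpow A (m*c - m)) = E := by
      rw [hEdef, ← tpow_add, show m + (m*c - m) = m*c by omega]
      exact heqE (m*c) hkmc (dvd_mul_left c m)
    have hfac' : tmul (tpow A (m*c - m)) (tpow A m) = E := by
      rw [hEdef, ← tpow_add, show (m*c - m) + m = m*c by omega]
      exact heqE (m*c) hkmc (dvd_mul_left c m)
    refine ⟨?_, ?_, ?_⟩
    · rw [← trrk_E hEidem]
      apply le_antisymm
      · exact trrk_le (fun q hq => le_trrk (hasNS_tmul_left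
          (show HasNSsub (tmul E (tpow A m)) q by rwa [hstab])))
      · exact trrk_le (fun q hq => le_trrk (hasNS_tmul_left
          (show HasNSsub (tmul (tpow A m) (tpow A (m*c - m))) q by rwa [hfac])))
    · have hspan : tSpan (fun j i => tpow A m i j) = tSpan (fun j i => E i j) := by
        apply Set.Subset.antisymm
        · have h1 := cols_tmul_subset (X := E) (Y := tpow A m)
          rwa [hstab] at h1
        · have h2 := cols_tmul_subset (X := tpow A m) (Y := tpow A (m*c - m))
          rwa [hfac] at h2
      show weakDim (tSpan fun j i => tpow A m i j) = (Rset E).card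
      rw [hspan]
      exact colrk_E hEidem
    · have hspan : tSpan (fun i j => tpow A m i j) = tSpan (fun i j => E i j) := by
        apply Set.Subset.antisymm
        · have h1 := rows_tmul_subset (X := tpow A m) (Y := E)
          rwa [hstab'] at h1
        · have h2 := rows_tmul_subset (X := tpow A (m*c - m)) (Y := tpow A m)
          rwa [hfac'] at h2
      show weakDim (tSpan fun i j => tpow A m i j) = (Rset E).card
      rw [hspan]
      exact rowrk_E hEidem
  refine ⟨hpart1, (Rset E).card, ?_, k, ?_⟩
  · intro m hm _
    exact hmain m hm
  · intro m hm
    exact hmain m hm
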